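/- Moreover, the function k_F above is independent of the choice of ξ up to μ-null sets: if ξ₁, ξ₂ ∈ L²(M, μ) both satisfy |ξᵢ(m)| = 1 μ-a.e., then |(Uξ₁)(m)|² = |(Uξ₂)(m)|² for μ-almost every m. -/

import Mathlib

open MeasureTheory

private lemma kF_aux {M : Type*} [MeasurableSpace M]
    (μ : Measure M) [IsFiniteMeasure μ] (F : M ≃ᵐ M)
    (U : Lp ℂ 2 μ ≃ₗᵢ[ℂ] Lp ℂ 2 μ)
    (hU : ∀ f : M → ℂ, Measurable f → (∃ C, ∀ x, ‖f x‖ ≤ C) →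
      ∀ ξ η : Lp ℂ 2 μ, (∀ᵐ m ∂μ, (η : M → ℂ) m = f m * (ξ : M → ℂ) m) →
        ∀ᵐ m ∂μ, (U η : M → ℂ) m = f (F.symm m) * (U ξ : M → ℂ) m)
    (ξ₁ ξ₂ : Lp ℂ 2 μ)
    (hξ₁ : ∀ᵐ m ∂μ, ‖(ξ₁ : M → ℂ) m‖ = 1) (hξ₂ : ∀ᵐ m ∂μ, ‖(ξ₂ : M → ℂ) m‖ = 1) :
    ∀ᵐ m ∂μ, ‖(U ξ₂ : M → ℂ) m‖ ≤ ‖(U ξ₁ : M → ℂ) m‖ := by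
  set g₁ : M → ℂ := (Lp.aestronglyMeasurable ξ₁).mk _ with hg₁def
  set g₂ : M → ℂ := (Lp.aestronglyMeasurable ξ₂).mk _ with hg₂def
  have hm₁ : Measurable g₁ := (Lp.aestronglyMeasurable ξ₁).stronglyMeasurable_mk.measurable
  have hm₂ : Measurable g₂ := (Lp.aestronglyMeasurable ξ₂).stronglyMeasurable_mk.measurable
  have he₁ : (ξ₁ : M → ℂ) =ᵐ[μ] g₁ := (Lp.aestronglyMeasurable ξ₁).ae_eq_mk
  have he₂ : (ξ₂ : M → ℂ) =ᵐ[μ] g₂ := (Lp.aestronglyMeasurable ξ₂).ae_eq_mk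
  set f : M → ℂ := fun m =>
    if ‖g₁ m‖ = 1 ∧ ‖g₂ m‖ = 1 then g₂ m * (starRingEnd ℂ) (g₁ m) else 0 with hfdef
  have hs : MeasurableSet {m | ‖g₁ m‖ = 1 ∧ ‖g₂ m‖ = 1} :=
    (hm₁.norm (measurableSet_singleton 1)).inter (hm₂.norm (measurableSet_singleton 1))
  have hf : Measurable f :=
    Measurable.ite hs (hm₂.mul ((Complex.continuous_conj.measurable.comp hm₁))) measurable_const
  have hbound : ∃ C, ∀ x, ‖f x‖ ≤ C := by
    refine ⟨1, fun x => ?_⟩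
    simp only [hfdef]
    split_ifs with h
    · rw [norm_mul, h.2, RCLike.norm_conj, h.1, one_mul]
    · simp
  have haeeq : ∀ᵐ m ∂μ, (ξ₂ : M → ℂ) m = f m * (ξ₁ : M → ℂ) m := by
    filter_upwards [he₁, he₂, hξ₁, hξ₂] with m h1 h2 h3 h4
    have hc : ‖g₁ m‖ = 1 ∧ ‖g₂ m‖ = 1 := ⟨h1 ▸ h3, h2 ▸ h4⟩
    simp only [hfdef, if_pos hc, h1, h2]
    rw [mul_assoc, Complex.conj_mul'] at *
    rw [hc.1]
    push_cast
    ring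
  have := hU f hf hbound ξ₁ ξ₂ haeeq
  filter_upwards [this] with m hm
  rw [hm, norm_mul]
  have : ‖f (F.symm m)‖ ≤ 1 := by
    obtain ⟨C, hC⟩ := hbound
    simp only [hfdef]
    split_ifs with h
    · rw [norm_mul, h.2, RCLike.norm_conj, h.1, one_mul]
    · simp
  nlinarith [norm_nonneg ((U ξ₁ : M → ℂ) m), norm_nonneg (f (F.symm m))]

theorem kF_independent_of_vector {M : Type*} [MeasurableSpace M]
    (μ : Measure M) [IsFiniteMeasure μ] (F : M ≃ᵐ M)
    (U : Lp ℂ 2 μ ≃ₗᵢ[ℂ] Lp ℂ 2 μ)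
    (hU : ∀ f : M → ℂ, Measurable f → (∃ C, ∀ x, ‖f x‖ ≤ C) →
      ∀ ξ η : Lp ℂ 2 μ, (∀ᵐ m ∂μ, (η : M → ℂ) m = f m * (ξ : M → ℂ) m) →
        ∀ᵐ m ∂μ, (U η : M → ℂ) m = f (F.symm m) * (U ξ : M → ℂ) m)
    (ξ₁ ξ₂ : Lp ℂ 2 μ)
    (hξ₁ : ∀ᵐ m ∂μ, ‖(ξ₁ : M → ℂ) m‖ = 1) (hξ₂ : ∀ᵐ m ∂μ, ‖(ξ₂ : M → ℂ) m‖ = 1) :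
    ∀ᵐ m ∂μ, ‖(U ξ₁ : M → ℂ) m‖ ^ 2 = ‖(U ξ₂ : M → ℂ) m‖ ^ 2 := by
  filter_upwards [kF_aux μ F U hU ξ₁ ξ₂ hξ₁ hξ₂, kF_aux μ F U hU ξ₂ ξ₁ hξ₂ hξ₁] with m h1 h2
  exact congrArg (· ^ 2) (le_antisymm h2 h1)
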